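/- Let c > 0, and for b ∈ ℝ let h(·, b) denote the density on (0,∞) given by h(u, b) = (c/√(2π)) e^{c|b|} u^{−3/2} exp(−b²u/2 − c²/(2u)) (the InverseGaussian(c/|b|, c²) density). If b, b' ∈ ℝ with |b| ≥ |b'|, then the Kullback–Leibler divergence satisfies KL(h(·,b) ‖ h(·,b')) ≤ c |b − b'|. -/

import Mathlib

open MeasureTheory Real

namespace KLIGaux
open Set

lemma gauss_int : ∫ x : ℝ, Real.exp (-x ^ 2 / 2) = Real.sqrt (2 * π) := by
  have h := integral_gaussian (1/2 : ℝ)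
  rw [show π / (1/2 : ℝ) = 2 * π by ring] at h
  rw [← h]; congr 1 with x; congr 1; ring

lemma gauss_integrable : Integrable (fun x : ℝ => Real.exp (-x ^ 2 / 2)) := by
  have h := integrable_exp_neg_mul_sq (by norm_num : (0:ℝ) < 1/2)
  have e : (fun x : ℝ => Real.exp (-x ^ 2 / 2)) = fun x => Real.exp (-(1/2) * x^2) := by
    funext x; congr 1; ring
  rw [e]; exact h

lemma hasDerivAt_phi (a c : ℝ) {x : ℝ} (hx : 0 < x) :
    HasDerivAt (fun u => a * Real.sqrt u - c / Real.sqrt u)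
      ((a * x + c) / (2 * x * Real.sqrt x)) x := by
  have hsx : 0 < Real.sqrt x := Real.sqrt_pos.mpr hx
  have h1 : HasDerivAt Real.sqrt (1 / (2 * Real.sqrt x)) x := Real.hasDerivAt_sqrt hx.ne'
  have h2 : HasDerivAt (fun u => c / Real.sqrt u)
      ((0 * Real.sqrt x - c * (1 / (2 * Real.sqrt x))) / (Real.sqrt x) ^ 2) x :=
    (hasDerivAt_const x c).div h1 hsx.ne'
  have h3 := (h1.const_mul a).sub h2
  refine HasDerivAt.congr_deriv h3 ?_
  have hs : Real.sqrt x ^ 2 = x := Real.sq_sqrt hx.le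
  rw [← hs]
  rw [Real.sqrt_sq hsx.le]
  field_simp
  ring

lemma hasDerivAt_psi (a c : ℝ) {x : ℝ} (hx : 0 < x) :
    HasDerivAt (fun u => a * Real.sqrt u + c / Real.sqrt u)
      ((a * x - c) / (2 * x * Real.sqrt x)) x := by
  have hsx : 0 < Real.sqrt x := Real.sqrt_pos.mpr hx
  have h1 : HasDerivAt Real.sqrt (1 / (2 * Real.sqrt x)) x := Real.hasDerivAt_sqrt hx.ne'
  have h2 : HasDerivAt (fun u => c / Real.sqrt u)
      ((0 * Real.sqrt x - c * (1 / (2 * Real.sqrt x))) / (Real.sqrt x) ^ 2) x :=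
    (hasDerivAt_const x c).div h1 hsx.ne'
  have h3 := (h1.const_mul a).add h2
  refine HasDerivAt.congr_deriv h3 ?_
  have hs : Real.sqrt x ^ 2 = x := Real.sq_sqrt hx.le
  rw [← hs]
  rw [Real.sqrt_sq hsx.le]
  field_simp
  ring

lemma psi_mono {a c : ℝ} (ha : 0 < a) (hc : 0 < c) :
    StrictMonoOn (fun u => a * Real.sqrt u + c / Real.sqrt u) (Set.Ici (c/a)) := by
  have hca : 0 < c / a := div_pos hc ha
  apply strictMonoOn_of_deriv_pos (convex_Ici _)
  · intro x hx
    exact ((hasDerivAt_psi a c (lt_of_lt_of_le hca hx)).continuousAt).continuousWithinAt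
  · intro x hx
    rw [interior_Ici] at hx
    have hxpos : 0 < x := hca.trans hx
    rw [(hasDerivAt_psi a c hxpos).deriv]
    have h1 : 0 < a * x - c := by
      have := hx; rw [Set.mem_Ioi, div_lt_iff₀ ha] at this; linarith
    have h2 : 0 < 2 * x * Real.sqrt x := by
      have := Real.sqrt_pos.mpr hxpos; positivity
    positivity
  
lemma psi_anti {a c : ℝ} (ha : 0 < a) (hc : 0 < c) :
    StrictAntiOn (fun u => a * Real.sqrt u + c / Real.sqrt u) (Set.Ioc 0 (c/a)) := by
  apply strictAntiOn_of_deriv_neg (convex_Ioc _ _)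
  · intro x hx
    exact ((hasDerivAt_psi a c hx.1).continuousAt).continuousWithinAt
  · intro x hx
    rw [interior_Ioc] at hx
    rw [(hasDerivAt_psi a c hx.1).deriv]
    have h1 : a * x - c < 0 := by
      have := hx.2; rw [lt_div_iff₀ ha] at this; linarith
    have h2 : 0 < 2 * x * Real.sqrt x := by
      have hs := Real.sqrt_pos.mpr hx.1; nlinarith [hx.1]
    exact div_neg_of_neg_of_pos h1 h2

lemma phi_mono {a c : ℝ} (ha : 0 < a) (hc : 0 < c) :
    StrictMonoOn (fun u => a * Real.sqrt u - c / Real.sqrt u) (Set.Ioi 0) := by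
  apply strictMonoOn_of_deriv_pos (convex_Ioi _)
  · intro x hx
    exact ((hasDerivAt_phi a c hx).continuousAt).continuousWithinAt
  · intro x hx
    rw [interior_Ioi] at hx
    have hx' : 0 < x := hx
    rw [(hasDerivAt_phi a c hx').deriv]
    have hs := Real.sqrt_pos.mpr hx
    have h1 : 0 < a * x + c := by nlinarith
    have h2 : 0 < 2 * x * Real.sqrt x := by nlinarith
    positivity

lemma phi_image {a c : ℝ} (ha : 0 < a) (hc : 0 < c) :
    (fun u => a * Real.sqrt u - c / Real.sqrt u) '' Set.Ioi 0 = Set.univ := by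
  apply Set.eq_univ_of_forall
  intro y
  set s := Real.sqrt (y^2 + 4*a*c) with hs
  have hs2 : s^2 = y^2 + 4*a*c := Real.sq_sqrt (by nlinarith)
  have hspos : 0 < s := Real.sqrt_pos.mpr (by nlinarith)
  have hys : 0 < y + s := by nlinarith [sq_nonneg (y + s), sq_nonneg (y - s)]
  set t := (y + s) / (2*a) with ht
  have htpos : 0 < t := by positivity
  refine ⟨t^2, Set.mem_Ioi.mpr (by positivity), ?_⟩
  have hst : Real.sqrt (t^2) = t := Real.sqrt_sq htpos.le
  simp only [hst]
  have htne : t ≠ 0 := htpos.ne'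
  field_simp
  rw [ht]
  field_simp
  ring_nf
  nlinarith [hs2]

lemma psi_ca {a c : ℝ} (ha : 0 < a) (hc : 0 < c) :
    a * Real.sqrt (c/a) + c / Real.sqrt (c/a) = 2 * Real.sqrt (a*c) := by
  have h1 : Real.sqrt (c/a) = Real.sqrt c / Real.sqrt a := Real.sqrt_div hc.le a
  have h2 : Real.sqrt (a*c) = Real.sqrt a * Real.sqrt c := Real.sqrt_mul ha.le c
  have ha2 : Real.sqrt a ^ 2 = a := Real.sq_sqrt ha.le
  have hc2 : Real.sqrt c ^ 2 = c := Real.sq_sqrt hc.le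
  have han : Real.sqrt a ≠ 0 := (Real.sqrt_pos.mpr ha).ne'
  have hcn : Real.sqrt c ≠ 0 := (Real.sqrt_pos.mpr hc).ne'
  rw [h1, h2]
  field_simp
  nlinarith [ha2, hc2]

lemma psi_img1 {a c : ℝ} (ha : 0 < a) (hc : 0 < c) :
    (fun u => a * Real.sqrt u + c / Real.sqrt u) '' Set.Ioc 0 (c/a)
      = Set.Ici (2 * Real.sqrt (a*c)) := by
  have hca : 0 < c/a := div_pos hc ha
  ext y
  constructor
  · rintro ⟨u, hu, rfl⟩
    rcases eq_or_lt_of_le hu.2 with h | h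
    · simp only [Set.mem_Ici, h, psi_ca ha hc, le_refl]
    · have := psi_anti ha hc hu ⟨hca, le_refl _⟩ h
      simp only at this
      rw [psi_ca ha hc] at this
      exact Set.mem_Ici.mpr this.le
  · intro hy
    rw [Set.mem_Ici] at hy
    have hmpos : 0 < 2 * Real.sqrt (a*c) := by
      have := Real.sqrt_pos.mpr (mul_pos ha hc); linarith
    have hypos : 0 < y := lt_of_lt_of_le hmpos hy
    have hy2 : 4*a*c ≤ y^2 := by
      have h2 : (2 * Real.sqrt (a*c))^2 = 4*(a*c) := by
        rw [mul_pow, Real.sq_sqrt (mul_pos ha hc).le]; ring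
      nlinarith
    set s := Real.sqrt (y^2 - 4*a*c) with hsdef
    have hs2 : s^2 = y^2 - 4*a*c := Real.sq_sqrt (by linarith)
    have hsnn : 0 ≤ s := Real.sqrt_nonneg _
    have hsy : s < y := by nlinarith
    set t := (y - s) / (2*a) with ht
    have htpos : 0 < t := by
      have : 0 < y - s := by linarith
      positivity
    have hta : a * t^2 ≤ c := by
      rw [ht, div_pow, ← mul_div_assoc, div_le_iff₀ (by positivity)]
      nlinarith [hs2, mul_nonneg (mul_nonneg ha.le hsnn) (sub_nonneg.mpr hsy.le)]
    refine ⟨t^2, ⟨by positivity, by rw [le_div_iff₀ ha]; nlinarith [hta]⟩, ?_⟩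
    have hst : Real.sqrt (t^2) = t := Real.sqrt_sq htpos.le
    simp only [hst]
    have htne : t ≠ 0 := htpos.ne'
    field_simp
    rw [ht]
    field_simp
    ring_nf
    nlinarith [hs2]

lemma psi_img2 {a c : ℝ} (ha : 0 < a) (hc : 0 < c) :
    (fun u => a * Real.sqrt u + c / Real.sqrt u) '' Set.Ioi (c/a)
      = Set.Ioi (2 * Real.sqrt (a*c)) := by
  have hca : 0 < c/a := div_pos hc ha
  ext y
  constructor
  · rintro ⟨u, hu, rfl⟩
    have hu' : c/a < u := hu
    have := psi_mono ha hc Set.self_mem_Ici (Set.mem_Ici.mpr hu'.le) hu'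
    simp only at this
    rw [psi_ca ha hc] at this
    exact Set.mem_Ioi.mpr this
  · intro hy
    rw [Set.mem_Ioi] at hy
    have hmpos : 0 < 2 * Real.sqrt (a*c) := by
      have := Real.sqrt_pos.mpr (mul_pos ha hc); linarith
    have hypos : 0 < y := hmpos.trans hy
    have hy2 : 4*a*c < y^2 := by
      have h2 : (2 * Real.sqrt (a*c))^2 = 4*(a*c) := by
        rw [mul_pow, Real.sq_sqrt (mul_pos ha hc).le]; ring
      nlinarith
    set s := Real.sqrt (y^2 - 4*a*c) with hsdef
    have hs2 : s^2 = y^2 - 4*a*c := Real.sq_sqrt (by linarith)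
    have hspos : 0 < s := Real.sqrt_pos.mpr (by linarith)
    set t := (y + s) / (2*a) with ht
    have htpos : 0 < t := by positivity
    have hta : c < a * t^2 := by
      rw [ht, div_pow, ← mul_div_assoc, lt_div_iff₀ (by positivity)]
      nlinarith [hs2, mul_pos (mul_pos ha hspos) (by linarith : (0:ℝ) < y + s)]
    refine ⟨t^2, Set.mem_Ioi.mpr (by rw [div_lt_iff₀ ha]; nlinarith [hta]), ?_⟩
    have hst : Real.sqrt (t^2) = t := Real.sqrt_sq htpos.le
    simp only [hst]
    have htne : t ≠ 0 := htpos.ne'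
    field_simp
    rw [ht]
    field_simp
    ring_nf
    nlinarith [hs2]

lemma phi_int {a c : ℝ} (ha : 0 < a) (hc : 0 < c) :
    IntegrableOn (fun u => (a*u+c)/(2*u*Real.sqrt u)
        * Real.exp (-(a*Real.sqrt u - c/Real.sqrt u)^2/2)) (Set.Ioi 0) ∧
      ∫ u in Set.Ioi (0:ℝ), (a*u+c)/(2*u*Real.sqrt u)
        * Real.exp (-(a*Real.sqrt u - c/Real.sqrt u)^2/2) = Real.sqrt (2*π) := by
  set φ : ℝ → ℝ := fun u => a * Real.sqrt u - c / Real.sqrt u with hφ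
  set φ' : ℝ → ℝ := fun x => (a*x+c)/(2*x*Real.sqrt x) with hφ'
  set g : ℝ → ℝ := fun x => Real.exp (-x^2/2) with hg
  have hderiv : ∀ x ∈ Set.Ioi (0:ℝ), HasDerivWithinAt φ (φ' x) (Set.Ioi 0) x :=
    fun x hx => (hasDerivAt_phi a c hx).hasDerivWithinAt
  have hinj := (phi_mono ha hc).injOn
  have hiff := integrableOn_image_iff_integrableOn_abs_deriv_smul
    measurableSet_Ioi hderiv hinj g
  have heq := integral_image_eq_integral_abs_deriv_smul
    measurableSet_Ioi hderiv hinj g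
  rw [phi_image ha hc] at hiff heq
  have habs : Set.EqOn (fun x => |φ' x| • g (φ x))
      (fun u => (a*u+c)/(2*u*Real.sqrt u)
        * Real.exp (-(a*Real.sqrt u - c/Real.sqrt u)^2/2)) (Set.Ioi 0) := by
    intro x hx
    have hx' : 0 < x := hx
    have hs := Real.sqrt_pos.mpr hx'
    have : 0 < φ' x := by
      rw [hφ']; have h1 : 0 < a*x+c := by nlinarith
      have h2 : 0 < 2*x*Real.sqrt x := by nlinarith
      positivity
    simp only [smul_eq_mul, abs_of_pos this, hφ', hg, hφ]
    rw [abs_of_pos (show (0:ℝ) < (a*x+c)/(2*x*Real.sqrt x) from this)]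
  constructor
  · exact ((hiff.mp (gauss_integrable.integrableOn)).congr_fun habs measurableSet_Ioi)
  · rw [← setIntegral_congr_fun measurableSet_Ioi habs, ← heq,
      MeasureTheory.setIntegral_univ]
    exact gauss_int

lemma psi_int {a c : ℝ} (ha : 0 < a) (hc : 0 < c) :
    IntegrableOn (fun u => (a*u-c)/(2*u*Real.sqrt u)
        * Real.exp (-(a*Real.sqrt u + c/Real.sqrt u)^2/2)) (Set.Ioi 0) ∧
      ∫ u in Set.Ioi (0:ℝ), (a*u-c)/(2*u*Real.sqrt u)
        * Real.exp (-(a*Real.sqrt u + c/Real.sqrt u)^2/2) = 0 := by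
  have hca : 0 < c / a := div_pos hc ha
  set ψ : ℝ → ℝ := fun u => a * Real.sqrt u + c / Real.sqrt u with hψ
  set ψ' : ℝ → ℝ := fun x => (a*x-c)/(2*x*Real.sqrt x) with hψ'
  set g : ℝ → ℝ := fun x => Real.exp (-x^2/2) with hg
  set F : ℝ → ℝ := fun u => ψ' u * g (ψ u) with hF
  -- piece 1 : Ioc 0 (c/a)
  have hderiv1 : ∀ x ∈ Set.Ioc (0:ℝ) (c/a), HasDerivWithinAt ψ (ψ' x) (Set.Ioc 0 (c/a)) x :=
    fun x hx => (hasDerivAt_psi a c hx.1).hasDerivWithinAt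
  have hinj1 := (psi_anti ha hc).injOn
  have hiff1 := integrableOn_image_iff_integrableOn_abs_deriv_smul
    measurableSet_Ioc hderiv1 hinj1 g
  have heq1 := integral_image_eq_integral_abs_deriv_smul
    measurableSet_Ioc hderiv1 hinj1 g
  rw [psi_img1 ha hc] at hiff1 heq1
  have habs1 : Set.EqOn (fun x => |ψ' x| • g (ψ x)) (fun u => -F u) (Set.Ioc 0 (c/a)) := by
    intro x hx
    have hx' : 0 < x := hx.1
    have hs := Real.sqrt_pos.mpr hx'
    have hd : ψ' x ≤ 0 := by
      rw [hψ']
      apply div_nonpos_of_nonpos_of_nonneg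
      · have := hx.2; rw [le_div_iff₀ ha] at this; linarith
      · nlinarith
    simp only [smul_eq_mul, abs_of_nonpos hd, hF]
    ring
  have hint1 : IntegrableOn (fun u => -F u) (Set.Ioc (0:ℝ) (c/a)) :=
    (hiff1.mp (gauss_integrable.integrableOn)).congr_fun habs1 measurableSet_Ioc
  have hI1 : ∫ u in Set.Ioc (0:ℝ) (c/a), F u
      = -∫ x in Set.Ici (2 * Real.sqrt (a*c)), g x := by
    rw [heq1, setIntegral_congr_fun measurableSet_Ioc habs1, integral_neg, neg_neg]
  -- piece 2 : Ioi (c/a)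
  have hderiv2 : ∀ x ∈ Set.Ioi (c/a), HasDerivWithinAt ψ (ψ' x) (Set.Ioi (c/a)) x :=
    fun x hx => (hasDerivAt_psi a c (hca.trans hx)).hasDerivWithinAt
  have hinj2 : Set.InjOn ψ (Set.Ioi (c/a)) :=
    ((psi_mono ha hc).injOn).mono Set.Ioi_subset_Ici_self
  have hiff2 := integrableOn_image_iff_integrableOn_abs_deriv_smul
    measurableSet_Ioi hderiv2 hinj2 g
  have heq2 := integral_image_eq_integral_abs_deriv_smul
    measurableSet_Ioi hderiv2 hinj2 g
  rw [psi_img2 ha hc] at hiff2 heq2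
  have habs2 : Set.EqOn (fun x => |ψ' x| • g (ψ x)) F (Set.Ioi (c/a)) := by
    intro x hx
    have hx' : 0 < x := hca.trans hx
    have hs := Real.sqrt_pos.mpr hx'
    have hd : 0 ≤ ψ' x := by
      rw [hψ']
      apply div_nonneg
      · have : c/a < x := hx; rw [div_lt_iff₀ ha] at this; linarith
      · nlinarith
    simp only [smul_eq_mul, abs_of_nonneg hd, hF]
  have hint2 : IntegrableOn F (Set.Ioi (c/a)) :=
    (hiff2.mp (gauss_integrable.integrableOn)).congr_fun habs2 measurableSet_Ioi
  have hI2 : ∫ u in Set.Ioi (c/a), F u = ∫ x in Set.Ioi (2 * Real.sqrt (a*c)), g x := by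
    rw [heq2, setIntegral_congr_fun measurableSet_Ioi habs2]
  -- combine
  have hunion : Set.Ioc (0:ℝ) (c/a) ∪ Set.Ioi (c/a) = Set.Ioi 0 :=
    Set.Ioc_union_Ioi_eq_Ioi hca.le
  have hdisj : Disjoint (Set.Ioc (0:ℝ) (c/a)) (Set.Ioi (c/a)) := Set.Ioc_disjoint_Ioi le_rfl
  have hintF1 : IntegrableOn F (Set.Ioc (0:ℝ) (c/a)) := by
    have h' : IntegrableOn (-fun u => -F u) (Set.Ioc (0:ℝ) (c/a)) := hint1.neg
    exact h'.congr_fun (fun x _ => by simp) measurableSet_Ioc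
  have hintF : IntegrableOn F (Set.Ioi (0:ℝ)) := by
    rw [← hunion]; exact hintF1.union hint2
  constructor
  · exact hintF
  · have := MeasureTheory.setIntegral_union hdisj measurableSet_Ioi hintF1 hint2 (f := F)
    rw [hunion] at this
    rw [show (∫ u in Set.Ioi (0:ℝ), (a*u-c)/(2*u*Real.sqrt u)
        * Real.exp (-(a*Real.sqrt u + c/Real.sqrt u)^2/2)) = ∫ u in Set.Ioi (0:ℝ), F u from rfl,
      this, hI1, hI2, integral_Ici_eq_integral_Ioi]
    ring

end KLIGaux

open KLIGaux in
/-- KL divergence bound between inverse Gaussian densities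
`h(u, b) = (c/√(2π)) e^{c|b|} u^{-3/2} exp(-b²u/2 - c²/(2u))` on `(0,∞)`:
if `|b'| ≤ |b|` then `KL(h(·,b) ‖ h(·,b')) ≤ c |b - b'|`. -/
theorem kl_invGaussian_le {c : ℝ} (hc : 0 < c) (b b' : ℝ) (hbb : |b'| ≤ |b|)
    (h : ℝ → ℝ → ℝ)
    (hdef : ∀ β u, h u β =
      (c / Real.sqrt (2 * π)) * Real.exp (c * |β|) * u ^ (-(3:ℝ)/2)
        * Real.exp (-(β ^ 2 * u) / 2 - c ^ 2 / (2 * u))) :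
    (∫ u in Set.Ioi (0:ℝ), h u b * Real.log (h u b / h u b')) ≤ c * |b - b'| := by
  have hsp : 0 < Real.sqrt (2*π) := Real.sqrt_pos.mpr (by positivity)
  rcases eq_or_lt_of_le (abs_nonneg b) with hb0 | ha
  -- trivial case b = 0
  · have hb : b = 0 := abs_eq_zero.mp hb0.symm
    have hb' : b' = 0 := abs_eq_zero.mp (le_antisymm (by simpa [hb] using hbb) (abs_nonneg _))
    have hzero : Set.EqOn (fun u => h u b * Real.log (h u b / h u b'))
        (fun _ => (0:ℝ)) (Set.Ioi 0) := by
      intro u hu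
      have hu' : 0 < u := hu
      have hpos : 0 < h u b := by
        rw [hdef]
        have := Real.rpow_pos_of_pos hu' (-(3:ℝ)/2)
        positivity
      simp only [hb, hb'] at hpos ⊢
      rw [div_self hpos.ne', Real.log_one, mul_zero]
    rw [setIntegral_congr_fun measurableSet_Ioi hzero]
    simp [hb, hb']
  -- main case 0 < |b|
  · set a : ℝ := |b| with hadef
    set a' : ℝ := |b'| with ha'def
    have ha' : 0 ≤ a' := abs_nonneg _
    set Fφ : ℝ → ℝ := fun u => (a*u+c)/(2*u*Real.sqrt u)
        * Real.exp (-(a*Real.sqrt u - c/Real.sqrt u)^2/2) with hFφ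
    set Fψ : ℝ → ℝ := fun u => (a*u-c)/(2*u*Real.sqrt u)
        * Real.exp (-(a*Real.sqrt u + c/Real.sqrt u)^2/2) with hFψ
    obtain ⟨hφint, hφval⟩ := phi_int ha hc
    obtain ⟨hψint, hψval⟩ := psi_int ha hc
    have hba : b^2 = a^2 := (sq_abs b).symm
    have hba' : b'^2 = a'^2 := (sq_abs b').symm
    -- rpow identity
    have hr : ∀ u : ℝ, 0 < u → u ^ (-(3:ℝ)/2) = 1/(u*Real.sqrt u) := by
      intro u hu
      rw [show (-(3:ℝ)/2) = -(3/2 : ℝ) by norm_num, Real.rpow_neg hu.le,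
        show (3/2:ℝ) = 1 + 1/2 by norm_num, Real.rpow_add hu, Real.rpow_one,
        ← Real.sqrt_eq_rpow, one_div]
    -- exponent bridges
    have e1 : ∀ u : ℝ, 0 < u → -(a*Real.sqrt u - c/Real.sqrt u)^2/2
        = a*c + (-(b^2*u)/2 - c^2/(2*u)) := by
      intro u hu
      obtain ⟨s, hsd⟩ : ∃ s, Real.sqrt u = s := ⟨_, rfl⟩
      have hs : s ^ 2 = u := by rw [← hsd]; exact Real.sq_sqrt hu.le
      have hs0 : s ≠ 0 := by rw [← hsd]; exact (Real.sqrt_pos.mpr hu).ne'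
      rw [hba, hsd, ← hs]
      field_simp
      ring
    have e2 : ∀ u : ℝ, 0 < u → -(a*Real.sqrt u + c/Real.sqrt u)^2/2
        = -(a*c) + (-(b^2*u)/2 - c^2/(2*u)) := by
      intro u hu
      obtain ⟨s, hsd⟩ : ∃ s, Real.sqrt u = s := ⟨_, rfl⟩
      have hs : s ^ 2 = u := by rw [← hsd]; exact Real.sq_sqrt hu.le
      have hs0 : s ≠ 0 := by rw [← hsd]; exact (Real.sqrt_pos.mpr hu).ne'
      rw [hba, hsd, ← hs]
      field_simp
      ring
    -- pointwise representation of h and u*h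
    have idh : Set.EqOn (fun u => (1/Real.sqrt (2*π)) * (Fφ u - Real.exp (2*(a*c)) * Fψ u))
        (fun u => h u b) (Set.Ioi 0) := by
      intro u hu
      have hu' : 0 < u := hu
      have hs0 : Real.sqrt u ≠ 0 := (Real.sqrt_pos.mpr hu').ne'
      simp only [hFφ, hFψ]
      beta_reduce
      rw [hdef b u, hr u hu', e1 u hu', e2 u hu',
        show c * |b| = a * c by rw [← hadef]; ring,
        show Real.exp (2*(a*c)) = Real.exp (a*c) * Real.exp (a*c) by
          rw [← Real.exp_add]; ring_nf]
      simp only [Real.exp_add, Real.exp_neg]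
      have he : Real.exp (a*c) ≠ 0 := (Real.exp_pos _).ne'
      field_simp
      ring
    have idu : Set.EqOn (fun u => (c/(a*Real.sqrt (2*π))) * (Fφ u + Real.exp (2*(a*c)) * Fψ u))
        (fun u => u * h u b) (Set.Ioi 0) := by
      intro u hu
      have hu' : 0 < u := hu
      have hs0 : Real.sqrt u ≠ 0 := (Real.sqrt_pos.mpr hu').ne'
      simp only [hFφ, hFψ]
      beta_reduce
      rw [hdef b u, hr u hu', e1 u hu', e2 u hu',
        show c * |b| = a * c by rw [← hadef]; ring,
        show Real.exp (2*(a*c)) = Real.exp (a*c) * Real.exp (a*c) by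
          rw [← Real.exp_add]; ring_nf]
      simp only [Real.exp_add, Real.exp_neg]
      have he : Real.exp (a*c) ≠ 0 := (Real.exp_pos _).ne'
      field_simp
      ring
    -- integrability and moments
    have hcomb1 : IntegrableOn
        (fun u => (1/Real.sqrt (2*π)) * (Fφ u - Real.exp (2*(a*c)) * Fψ u)) (Set.Ioi 0) :=
      ((hφint.sub (hψint.const_mul _)).const_mul _)
    have hcomb2 : IntegrableOn
        (fun u => (c/(a*Real.sqrt (2*π))) * (Fφ u + Real.exp (2*(a*c)) * Fψ u)) (Set.Ioi 0) :=
      ((hφint.add (hψint.const_mul _)).const_mul _)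
    have hint_h : IntegrableOn (fun u => h u b) (Set.Ioi 0) :=
      hcomb1.congr_fun idh measurableSet_Ioi
    have hint_u : IntegrableOn (fun u => u * h u b) (Set.Ioi 0) :=
      hcomb2.congr_fun idu measurableSet_Ioi
    have hI_h : ∫ u in Set.Ioi (0:ℝ), h u b = 1 := by
      rw [← setIntegral_congr_fun measurableSet_Ioi idh, MeasureTheory.integral_const_mul,
        integral_sub hφint (hψint.const_mul _), MeasureTheory.integral_const_mul, hφval, hψval]
      field_simp
      ring
    have hI_u : ∫ u in Set.Ioi (0:ℝ), u * h u b = c/a := by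
      rw [← setIntegral_congr_fun measurableSet_Ioi idu, MeasureTheory.integral_const_mul,
        integral_add hφint (hψint.const_mul _), MeasureTheory.integral_const_mul, hφval, hψval]
      field_simp
      ring
    -- rewrite integrand
    have hlog : Set.EqOn (fun u => h u b * Real.log (h u b / h u b'))
        (fun u => (c*(a - a')) * h u b - ((a^2 - a'^2)/2) * (u * h u b)) (Set.Ioi 0) := by
      intro u hu
      have hu' : 0 < u := hu
      have hP : (c / Real.sqrt (2 * π)) * u ^ (-(3:ℝ)/2) ≠ 0 := by
        have := Real.rpow_pos_of_pos hu' (-(3:ℝ)/2)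
        positivity
      have hrepr : ∀ β : ℝ, h u β = ((c / Real.sqrt (2 * π)) * u ^ (-(3:ℝ)/2))
          * Real.exp (c*|β| + (-(β^2*u)/2 - c^2/(2*u))) := by
        intro β; rw [hdef β u, Real.exp_add]; ring
      simp only
      rw [hrepr b, hrepr b', mul_div_mul_left _ _ hP, ← Real.exp_sub, Real.log_exp]
      rw [hba, hba', ← hadef, ← ha'def]
      ring
    rw [setIntegral_congr_fun measurableSet_Ioi hlog,
      integral_sub (hint_h.const_mul _) (hint_u.const_mul _),
      MeasureTheory.integral_const_mul, MeasureTheory.integral_const_mul, hI_h, hI_u]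
    -- final inequality
    have hd : a - a' ≤ |b - b'| := abs_sub_abs_le_abs_sub b b'
    have h0 : 0 ≤ a - a' := sub_nonneg.mpr hbb
    have hdn : 0 ≤ |b - b'| := abs_nonneg _
    have key : c*(a-a') * 1 - (a^2 - a'^2)/2 * (c/a) = c*(a-a')^2/(2*a) := by
      field_simp
      ring
    rw [key, div_le_iff₀ (by positivity : (0:ℝ) < 2*a)]
    nlinarith [mul_nonneg (mul_nonneg hc.le h0) (sub_nonneg.mpr hd),
      mul_nonneg (mul_nonneg hc.le hdn) (by positivity : (0:ℝ) ≤ a + a')]
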